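/- Twist-operator orthogonality (finite-volume step of the Yamanaka–Oshikawa–Affleck theorem). Consider the Hubbard model on the periodic chain Λ = {1, …, N} with period P, i.e., t_{x+P,y+P} = t_{x,y} and U_{x+P} = U_x (indices modulo N), and let T_P denote the unitary translation operator implementing c_{x,σ} ↦ c_{x+P,σ}. Let Φ be a normalized state with N̂_e Φ = N_e Φ and N̂_↑ Φ = (N_e/2) Φ, where N̂_↑ = Σ_x n_{x,↑}, and suppose T_P Φ = Φ. Set Ψ = U_tw Φ with the twist operator U_tw = exp[2πi Σ_{x=1}^{N} (x/N) n_{x,↑}], and let ν = N_e/N. Then T_P Ψ = e^{iπPν} Ψ. Consequently, whenever Pν/2 is not an integer, Ψ is orthogonal to Φ. -/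

import Mathlib

/-!  Common framework: the Hubbard model on a finite lattice, formalized
concretely on the fermionic Fock space realized as `Finset (Λ × Bool) → ℂ`. -/

noncomputable section
namespace Hubbard

open scoped BigOperators

variable (Λ : Type*) [Fintype Λ] [LinearOrder Λ]

/-- Spin indices: `true` = ↑, `false` = ↓. -/
abbrev Spin := Bool

/-- The fermionic Fock space over the set of modes `Λ × Spin`,
realized concretely in the occupation-number basis. -/
abbrev FockSpace := Finset (Λ × Spin) → ℂ

variable {Λ}

/-- An auxiliary (lexicographic) strict order on modes, fixing the sign
convention of the fermionic operators. -/
def mlt (j i : Λ × Spin) : Prop := j.1 < i.1 ∨ (j.1 = i.1 ∧ j.2 < i.2)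

instance (i : Λ × Spin) : DecidablePred (fun j => mlt j i) := fun j =>
  inferInstanceAs (Decidable (j.1 < i.1 ∨ (j.1 = i.1 ∧ j.2 < i.2)))

/-- The fermionic sign `(-1)^{#{j ∈ S : j < i}}`. -/
def sgn (i : Λ × Spin) (S : Finset (Λ × Spin)) : ℂ :=
  (-1 : ℂ) ^ (S.filter (fun j => mlt j i)).card

/-- The annihilation operator `c_{x,σ}` for the mode `i = (x,σ)`. -/
def cop (i : Λ × Spin) : Module.End ℂ (FockSpace Λ) where
  toFun ψ := fun S => if i ∈ S then 0 else sgn i S * ψ (insert i S)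
  map_add' ψ φ := by funext S; by_cases h : i ∈ S <;> simp [h, mul_add]
  map_smul' a ψ := by
    funext S; by_cases h : i ∈ S <;> simp [h]
    ring
/-- The creation operator `c†_{x,σ}` for the mode `i = (x,σ)`. -/
def cdag (i : Λ × Spin) : Module.End ℂ (FockSpace Λ) where
  toFun ψ := fun S => if i ∈ S then sgn i (S.erase i) * ψ (S.erase i) else 0
  map_add' ψ φ := by funext S; by_cases h : i ∈ S <;> simp [h, mul_add]
  map_smul' a ψ := by
    funext S; by_cases h : i ∈ S <;> simp [h]
    ring

/-- The number operator `n_{x,σ} = c†_{x,σ} c_{x,σ}`. -/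
def nop (i : Λ × Spin) : Module.End ℂ (FockSpace Λ) := cdag i ∘ₗ cop i

/-- The total electron number operator `N̂_e`. -/
def Nhat : Module.End ℂ (FockSpace Λ) := ∑ i : Λ × Spin, nop i

/-- The number operator of up-spin electrons, `N̂_↑`. -/
def NhatUp : Module.End ℂ (FockSpace Λ) := ∑ x : Λ, nop (x, true)

/-- The hopping Hamiltonian `H_hop = Σ_{x,y,σ} t_{x,y} c†_{x,σ} c_{y,σ}`. -/
def Hhop (t : Λ → Λ → ℝ) : Module.End ℂ (FockSpace Λ) :=
  ∑ x : Λ, ∑ y : Λ, ∑ σ : Spin, (t x y : ℂ) • (cdag (x, σ) ∘ₗ cop (y, σ))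

/-- The interaction Hamiltonian `H_int = Σ_x U_x n_{x,↑} n_{x,↓}`. -/
def Hint (U : Λ → ℝ) : Module.End ℂ (FockSpace Λ) :=
  ∑ x : Λ, (U x : ℂ) • (nop (x, true) ∘ₗ nop (x, false))

/-- The Hubbard Hamiltonian `H = H_hop + H_int`. -/
def Ham (t : Λ → Λ → ℝ) (U : Λ → ℝ) : Module.End ℂ (FockSpace Λ) := Hhop t + Hint U

/-- The Pauli matrices `p^(α)`, `α = 1,2,3` (here indexed by `Fin 3`);
rows/columns indexed by spins (`true` = ↑ first). -/
def pauli (α : Fin 3) (s τ : Spin) : ℂ :=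
  if α = 0 then (if s = τ then 0 else 1)
  else if α = 1 then (if s = τ then 0 else if s then -Complex.I else Complex.I)
  else (if s = τ then (if s then 1 else -1) else 0)

/-- The local spin operator `S^(α)_x = (1/2) Σ_{σ,τ} c†_{x,σ} (p^(α))_{σ,τ} c_{x,τ}`. -/
def spinOp (α : Fin 3) (x : Λ) : Module.End ℂ (FockSpace Λ) :=
  (1 / 2 : ℂ) • ∑ s : Spin, ∑ τ : Spin, pauli α s τ • (cdag (x, s) ∘ₗ cop (x, τ))

/-- The total spin operator `S^(α)_tot`. -/
def Stot (α : Fin 3) : Module.End ℂ (FockSpace Λ) := ∑ x : Λ, spinOp α x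

/-- The squared total spin `(Ŝ_tot)²`. -/
def StotSq : Module.End ℂ (FockSpace Λ) := ∑ α : Fin 3, Stot α ∘ₗ Stot α

/-- The spin-spin coupling `Ŝ_x · Ŝ_y`. -/
def SdotS (x y : Λ) : Module.End ℂ (FockSpace Λ) := ∑ α : Fin 3, spinOp α x ∘ₗ spinOp α y

/-- The inner product on the Fock space. -/
def fdot (ψ φ : FockSpace Λ) : ℂ := ∑ S : Finset (Λ × Spin), (starRingEnd ℂ) (ψ S) * φ S

/-- The vacuum vector `Φ_vac`. -/
def vac : FockSpace Λ := fun S => if S = ∅ then 1 else 0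

/-- The eigenspace of an operator for a real eigenvalue. -/
def eigR (A : Module.End ℂ (FockSpace Λ)) (μ : ℝ) : Submodule ℂ (FockSpace Λ) :=
  Module.End.eigenspace A (μ : ℂ)

/-- The simultaneous eigenspace: energy `E` within the `N_e`-electron sector. -/
def sector (H : Module.End ℂ (FockSpace Λ)) (Ne : ℕ) (E : ℝ) : Submodule ℂ (FockSpace Λ) :=
  eigR H E ⊓ eigR Nhat (Ne : ℝ)

/-- The set of energy eigenvalues in the `N_e`-electron sector. -/
def energies (H : Module.End ℂ (FockSpace Λ)) (Ne : ℕ) : Set ℝ :=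
  {E | sector H Ne E ≠ ⊥}

/-- The ground-state energy in the `N_e`-electron sector. -/
def groundEnergy (H : Module.End ℂ (FockSpace Λ)) (Ne : ℕ) : ℝ := sInf (energies H Ne)

/-- The space of ground states in the `N_e`-electron sector. -/
def groundSpace (H : Module.End ℂ (FockSpace Λ)) (Ne : ℕ) : Submodule ℂ (FockSpace Λ) :=
  sector H Ne (groundEnergy H Ne)

/-- `E_min(S)`: the lowest energy among states with `N̂_e = N_e` and total spin `S`,
i.e. `(Ŝ_tot)² = S(S+1)`. -/
def Emin (H : Module.End ℂ (FockSpace Λ)) (Ne : ℕ) (S : ℝ) : ℝ :=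
  sInf {E : ℝ | eigR H E ⊓ eigR Nhat (Ne : ℝ) ⊓ eigR StotSq (S * (S + 1)) ≠ ⊥}

/-- The orthogonal projection onto the hard-core subspace (no doubly occupied sites). -/
def hcProj : Module.End ℂ (FockSpace Λ) where
  toFun ψ := fun S => if ∃ x : Λ, (x, true) ∈ S ∧ (x, false) ∈ S then 0 else ψ S
  map_add' ψ φ := by
    funext S; by_cases h : ∃ x : Λ, (x, true) ∈ S ∧ (x, false) ∈ S <;> simp [h]
  map_smul' a ψ := by
    funext S; by_cases h : ∃ x : Λ, (x, true) ∈ S ∧ (x, false) ∈ S <;> simp [h]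

/-- The `U = ∞` (hard-core) Hamiltonian `H_∞ = P H_hop P`. -/
def Hinf (t : Λ → Λ → ℝ) : Module.End ℂ (FockSpace Λ) := hcProj ∘ₗ Hhop t ∘ₗ hcProj

/-- Energy-`E` eigenspace inside the `N_e`-electron hard-core subspace. -/
def hcSector (H : Module.End ℂ (FockSpace Λ)) (Ne : ℕ) (E : ℝ) : Submodule ℂ (FockSpace Λ) :=
  eigR H E ⊓ eigR Nhat (Ne : ℝ) ⊓ eigR hcProj 1

/-- Energy eigenvalues in the `N_e`-electron hard-core subspace. -/
def hcEnergies (H : Module.End ℂ (FockSpace Λ)) (Ne : ℕ) : Set ℝ := {E | hcSector H Ne E ≠ ⊥}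

/-- Ground energy in the `N_e`-electron hard-core subspace. -/
def hcGroundEnergy (H : Module.End ℂ (FockSpace Λ)) (Ne : ℕ) : ℝ := sInf (hcEnergies H Ne)

/-- Ground states in the `N_e`-electron hard-core subspace. -/
def hcGroundSpace (H : Module.End ℂ (FockSpace Λ)) (Ne : ℕ) : Submodule ℂ (FockSpace Λ) :=
  hcSector H Ne (hcGroundEnergy H Ne)

/-- The orthogonal projection onto the `N_e`-electron sector. -/
def numProj (Ne : ℕ) : Module.End ℂ (FockSpace Λ) where
  toFun ψ := fun S => if S.card = Ne then ψ S else 0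
  map_add' ψ φ := by funext S; by_cases h : S.card = Ne <;> simp [h]
  map_smul' a ψ := by funext S; by_cases h : S.card = Ne <;> simp [h]

/-- The matrix of an operator in the occupation-number basis. -/
def toMat (A : Module.End ℂ (FockSpace Λ)) :
    Matrix (Finset (Λ × Spin)) (Finset (Λ × Spin)) ℂ :=
  LinearMap.toMatrix (Pi.basisFun ℂ (Finset (Λ × Spin)))
    (Pi.basisFun ℂ (Finset (Λ × Spin))) A

/-- The canonical Gibbs expectation `Tr[A e^{-βH}]/Tr[e^{-βH}]`, the traces being taken
over the `N_e`-electron sector (realized with the projection `numProj Ne`). -/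
def canonExpect (H : Module.End ℂ (FockSpace Λ)) (β : ℝ) (Ne : ℕ)
    (A : Module.End ℂ (FockSpace Λ)) : ℂ :=
  Matrix.trace (toMat (numProj Ne ∘ₗ A ∘ₗ numProj Ne) *
      NormedSpace.exp ((-β : ℂ) • toMat (numProj Ne ∘ₗ H ∘ₗ numProj Ne))) /
    Matrix.trace (toMat (numProj Ne) *
      NormedSpace.exp ((-β : ℂ) • toMat (numProj Ne ∘ₗ H ∘ₗ numProj Ne)))

/-- The pair operator `c†_{x,↑} c†_{x,↓} c_{y,↑} c_{y,↓} + h.c.`. -/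
def pairOp (x y : Λ) : Module.End ℂ (FockSpace Λ) :=
  cdag (x, true) ∘ₗ cdag (x, false) ∘ₗ cop (y, true) ∘ₗ cop (y, false) +
    cdag (y, false) ∘ₗ cdag (y, true) ∘ₗ cop (x, false) ∘ₗ cop (x, true)


/-- The unitary twist operator
`U_tw = exp[2πi Σ_{x=1}^{N} (x/N) n_{x,↑}]` on the chain `{1, …, N}` (realized as
`Fin N`, the site `x` corresponding to the index of value `x − 1`); it is diagonal
in the occupation-number basis. -/
def Utw (N : ℕ) : Module.End ℂ (FockSpace (Fin N)) where
  toFun ψ := fun S =>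
    Complex.exp (2 * Real.pi * Complex.I *
        (∑ m ∈ S.filter (fun m => m.2 = true), ((m.1.val : ℂ) + 1)) / N) * ψ S
  map_add' ψ φ := by funext S; simp [mul_add]
  map_smul' a ψ := by funext S; simp; ring

/-- Translation of the ring `{1, …, N}` by `P` sites. -/
def shiftP (N P : ℕ) (hN : 0 < N) (x : Fin N) : Fin N :=
  ⟨(x.val + P) % N, Nat.mod_lt _ hN⟩

set_option linter.unusedSectionVars false

/-! ### Auxiliary lemmas for the twist-orthogonality theorem -/

/-- Basis vector of the occupation number basis. -/
def eS (S : Finset (Λ × Spin)) : FockSpace Λ := fun R => if R = S then 1 else 0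

lemma cdag_apply (i : Λ × Spin) (ψ : FockSpace Λ) (S : Finset (Λ × Spin)) :
    cdag i ψ S = if i ∈ S then sgn i (S.erase i) * ψ (S.erase i) else 0 := rfl

lemma cop_apply (i : Λ × Spin) (ψ : FockSpace Λ) (S : Finset (Λ × Spin)) :
    cop i ψ S = if i ∈ S then 0 else sgn i S * ψ (insert i S) := rfl

lemma sgn_mul_self (i : Λ × Spin) (S : Finset (Λ × Spin)) : sgn i S * sgn i S = 1 := by
  rw [sgn, ← mul_pow]; norm_num

lemma nop_apply (i : Λ × Spin) (ψ : FockSpace Λ) (S : Finset (Λ × Spin)) :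
    nop i ψ S = if i ∈ S then ψ S else 0 := by
  rw [nop]
  by_cases h : i ∈ S
  · rw [LinearMap.comp_apply, cdag_apply, if_pos h, cop_apply,
      if_neg (Finset.notMem_erase i S), Finset.insert_erase h, ← mul_assoc,
      sgn_mul_self, one_mul, if_pos h]
  · rw [LinearMap.comp_apply, cdag_apply, if_neg h, if_neg h]

lemma eS_decomp (ψ : FockSpace Λ) : ψ = ∑ S : Finset (Λ × Spin), ψ S • eS S := by
  funext R
  rw [Finset.sum_apply]
  simp [eS, Finset.sum_ite_eq]

lemma cdag_eS (i : Λ × Spin) (S : Finset (Λ × Spin)) (h : i ∉ S) :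
    cdag i (eS S) = sgn i S • eS (insert i S) := by
  funext R
  rw [cdag_apply]
  by_cases hR : R = insert i S
  · subst hR
    rw [if_pos (Finset.mem_insert_self i S), Finset.erase_insert h]
    simp [eS]
  · have hRHS : (sgn i S • eS (insert i S)) R = 0 := by simp [eS, hR]
    rw [hRHS]
    by_cases hiR : i ∈ R
    · have h' : ¬ (R.erase i = S) := fun hE => hR (by rw [← Finset.insert_erase hiR, hE])
      rw [if_pos hiR]
      simp [eS, h']
    · rw [if_neg hiR]

lemma fdot_smul_right (a : ℂ) (ψ φ : FockSpace Λ) : fdot ψ (a • φ) = a * fdot ψ φ := by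
  rw [fdot, fdot, Finset.mul_sum]
  exact Finset.sum_congr rfl fun S _ => by simp [Pi.smul_apply]; ring

lemma NhatUp_apply (ψ : FockSpace Λ) (S : Finset (Λ × Spin)) :
    NhatUp ψ S = ((S.filter (fun m => m.2 = true)).card : ℂ) * ψ S := by
  classical
  rw [NhatUp, LinearMap.sum_apply, Finset.sum_apply]
  simp_rw [nop_apply]
  rw [← Finset.sum_filter, Finset.sum_const]
  have hcard : (Finset.univ.filter (fun x : Λ => (x, true) ∈ S)).card
      = (S.filter (fun m => m.2 = true)).card := by
    apply Finset.card_bij (fun x _ => (x, true))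
    · intro x hx
      simp only [Finset.mem_filter, Finset.mem_univ, true_and] at hx
      simp only [Finset.mem_filter]
      exact ⟨hx, by trivial⟩
    · intro a _ b _ hab
      exact congrArg Prod.fst hab
    · rintro ⟨a, b⟩ hm
      simp only [Finset.mem_filter] at hm
      obtain ⟨hmS, hb⟩ := hm
      have hb' : b = true := hb
      subst hb'
      exact ⟨a, by simp [hmS], rfl⟩
  rw [hcard, nsmul_eq_mul]

/-- **Twist-operator orthogonality** (the finite-volume step of the
Yamanaka–Oshikawa–Affleck theorem).  Let `T` be the unitary translation operator
by the period `P` (implementing `c_{x,σ} ↦ c_{x+P,σ}`), and let `Φ` be a normalized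
state with `N̂_e Φ = N_e Φ`, `N̂_↑ Φ = (N_e/2) Φ` and `T Φ = Φ`.  Then the twisted
state `Ψ = U_tw Φ` satisfies `T Ψ = e^{iπPν} Ψ` with `ν = N_e/N`; consequently, if
`Pν/2` is not an integer, `Ψ` is orthogonal to `Φ`. -/
theorem twist_orthogonality
    (N P : ℕ) (hN : 0 < N)
    (t : Fin N → Fin N → ℝ) (U : Fin N → ℝ)
    (hsym : ∀ x y, t x y = t y x)
    (htper : ∀ x y : Fin N, t (shiftP N P hN x) (shiftP N P hN y) = t x y)
    (hUper : ∀ x : Fin N, U (shiftP N P hN x) = U x)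
    (T : Module.End ℂ (FockSpace (Fin N)))
    (hTunitary : ∀ ψ φ : FockSpace (Fin N), fdot (T ψ) (T φ) = fdot ψ φ)
    (hTbij : Function.Bijective T)
    (hTvac : T vac = vac)
    (hTc : ∀ (x : Fin N) (σ : Spin),
        cop (x, σ) ∘ₗ T = T ∘ₗ cop (shiftP N P hN x, σ))
    (hTcdag : ∀ (x : Fin N) (σ : Spin),
        cdag (x, σ) ∘ₗ T = T ∘ₗ cdag (shiftP N P hN x, σ))
    (Ne Nup : ℕ) (hNe : Ne = 2 * Nup)
    (Φ : FockSpace (Fin N))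
    (hnorm : fdot Φ Φ = 1)
    (hNeΦ : Nhat Φ = ((Ne : ℝ) : ℂ) • Φ)
    (hNupΦ : NhatUp Φ = ((Nup : ℝ) : ℂ) • Φ)
    (hTΦ : T Φ = Φ) :
    T (Utw N Φ) =
        Complex.exp (Real.pi * Complex.I * P * ((Ne : ℝ) / N)) • Utw N Φ ∧
      ((¬ ∃ k : ℤ, (P : ℝ) * ((Ne : ℝ) / N) / 2 = (k : ℝ)) →
        fdot Φ (Utw N Φ) = 0) := by
  have hNC : (N : ℂ) ≠ 0 := Nat.cast_ne_zero.mpr hN.ne'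
  -- the shift as an equivalence
  have hinj : Function.Injective (shiftP N P hN) := by
    intro x y hxy
    have h1 : (x.val + P) % N = (y.val + P) % N := congrArg Fin.val hxy
    have h2 : x.val % N = y.val % N := Nat.ModEq.add_right_cancel' P h1
    exact Fin.ext (by rwa [Nat.mod_eq_of_lt x.isLt, Nat.mod_eq_of_lt y.isLt] at h2)
  set shiftE : Fin N ≃ Fin N :=
    Equiv.ofBijective _ (Finite.injective_iff_bijective.mp hinj) with hshiftE
  have hshiftE_ap : ∀ x, shiftE x = shiftP N P hN x := fun _ => rfl
  set eqv : (Fin N × Spin) ≃ (Fin N × Spin) :=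
    Equiv.prodCongr shiftE.symm (Equiv.refl Spin) with heqv
  have heqv_ap : ∀ m : Fin N × Spin, eqv m = (shiftE.symm m.1, m.2) := fun _ => rfl
  have heqv_symm : ∀ m : Fin N × Spin, eqv.symm m = (shiftP N P hN m.1, m.2) := by
    rintro ⟨x, s⟩
    rw [heqv, Equiv.prodCongr_symm, Equiv.prodCongr_apply, Equiv.symm_symm]
    simp [hshiftE_ap]
  -- commutation of T with creation operators, mode version
  have hTcdag' : ∀ (i : Fin N × Spin) (ψ : FockSpace (Fin N)),
      T (cdag i ψ) = cdag (eqv i) (T ψ) := by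
    intro i ψ
    have h := hTcdag (shiftE.symm i.1) i.2
    have hi : ((shiftP N P hN (shiftE.symm i.1), i.2) : Fin N × Spin) = i := by
      rw [← hshiftE_ap, Equiv.apply_symm_apply]
    rw [hi] at h
    have h2 := LinearMap.congr_fun h ψ
    simp only [LinearMap.comp_apply] at h2
    have heqvi : eqv i = (shiftE.symm i.1, i.2) := rfl
    rw [heqvi]
    exact h2.symm
  -- action of T on basis vectors
  have Tbasis : ∀ S : Finset (Fin N × Spin), ∃ e : ℂ,
      T (eS S) = e • eS (S.map eqv.toEmbedding) := by
    intro S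
    induction S using Finset.induction_on with
    | empty =>
      refine ⟨1, ?_⟩
      rw [Finset.map_empty, one_smul]
      exact hTvac
    | @insert i S hiS ih =>
      obtain ⟨e, he⟩ := ih
      have hmem : eqv i ∉ S.map eqv.toEmbedding := fun hmm => hiS ((Finset.mem_map' eqv.toEmbedding).mp hmm)
      refine ⟨sgn i S * e * sgn (eqv i) (S.map eqv.toEmbedding), ?_⟩
      have h1 : eS (insert i S) = sgn i S • cdag i (eS S) := by
        rw [cdag_eS i S hiS, smul_smul, sgn_mul_self, one_smul]
      rw [h1, map_smul, hTcdag', he, map_smul, cdag_eS _ _ hmem, Finset.map_insert,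
        smul_smul, smul_smul]
      exact congrArg (fun X => (sgn i S * e * sgn (eqv i) (S.map eqv.toEmbedding)) • eS X)
        (Finset.ext fun a => by simp)
  choose ε hε using Tbasis
  -- the inverse map on finsets
  set Sτ : Finset (Fin N × Spin) → Finset (Fin N × Spin) :=
    fun R => R.map eqv.symm.toEmbedding with hSτ
  have hback : ∀ R, (Sτ R).map eqv.toEmbedding = R := by
    intro R
    ext m
    simp [hSτ, Finset.mem_map_equiv]
  have hfwd : ∀ S, Sτ (S.map eqv.toEmbedding) = S := by
    intro S
    ext m
    simp [hSτ, Finset.mem_map_equiv]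
  -- pointwise action of T
  have Tapply : ∀ (ψ : FockSpace (Fin N)) (R : Finset (Fin N × Spin)),
      T ψ R = ε (Sτ R) * ψ (Sτ R) := by
    intro ψ R
    conv_lhs => rw [eS_decomp ψ]
    rw [map_sum, Finset.sum_apply]
    have hterm : ∀ S : Finset (Fin N × Spin),
        (T (ψ S • eS S)) R = ψ S * (ε S * (if Sτ R = S then 1 else 0)) := by
      intro S
      have hval : eS (S.map eqv.toEmbedding) R = (if Sτ R = S then (1 : ℂ) else 0) := by
        by_cases hS : Sτ R = S
        · rw [if_pos hS]
          have hRS : R = S.map eqv.toEmbedding := by rw [← hS, hback]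
          rw [hRS]
          simp [eS]
        · rw [if_neg hS]
          have hRS : R ≠ S.map eqv.toEmbedding := fun hRS => hS (by rw [hRS, hfwd])
          simp [eS, hRS]
      rw [map_smul, hε, Pi.smul_apply, Pi.smul_apply, smul_eq_mul, smul_eq_mul, hval]
    rw [Finset.sum_congr rfl fun S _ => hterm S]
    rw [Finset.sum_eq_single_of_mem (Sτ R) (Finset.mem_univ _)
      (fun S _ hS => by rw [if_neg fun h => hS h.symm, mul_zero, mul_zero])]
    rw [if_pos rfl, mul_one, mul_comm]
  -- coefficient identity from T Φ = Φ
  have hcoef : ∀ R, ε (Sτ R) * Φ (Sτ R) = Φ R := by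
    intro R
    have h := Tapply Φ R
    rw [hTΦ] at h
    exact h.symm
  have Utw_apply : ∀ (ψ : FockSpace (Fin N)) (S : Finset (Fin N × Spin)),
      Utw N ψ S = Complex.exp (2 * Real.pi * Complex.I *
        (∑ m ∈ S.filter (fun m => m.2 = true), ((m.1.val : ℂ) + 1)) / N) * ψ S :=
    fun ψ S => rfl
  -- the up-spin particle number on the support of Φ
  have hup : ∀ R, Φ R ≠ 0 → (R.filter (fun m => m.2 = true)).card = Nup := by
    intro R hR
    have h := congrFun hNupΦ R
    rw [NhatUp_apply] at h
    rw [Pi.smul_apply, smul_eq_mul] at h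
    have h2 := mul_right_cancel₀ hR h
    exact_mod_cast h2
  -- arithmetic of the mod
  have hterm2 : ∀ x : ℕ, (((x + P) % N : ℕ) : ℂ)
      = (x : ℂ) + P - N * (((x + P) / N : ℕ) : ℂ) := by
    intro x
    have h := Nat.div_add_mod (x + P) N
    have h' : ((N * ((x + P) / N) : ℕ) : ℂ) + (((x + P) % N : ℕ) : ℂ) = (x : ℂ) + P := by
      exact_mod_cast congrArg (Nat.cast : ℕ → ℂ) h
    push_cast at h'
    linear_combination h'
  -- the key phase identity
  have key : ∀ R : Finset (Fin N × Spin), (R.filter (fun m => m.2 = true)).card = Nup →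
      Complex.exp (2 * Real.pi * Complex.I *
          (∑ m ∈ (Sτ R).filter (fun m => m.2 = true), ((m.1.val : ℂ) + 1)) / N)
        = Complex.exp (Real.pi * Complex.I * P * ((Ne : ℝ) / N)) *
          Complex.exp (2 * Real.pi * Complex.I *
            (∑ m ∈ R.filter (fun m => m.2 = true), ((m.1.val : ℂ) + 1)) / N) := by
    intro R hR
    have hfilter : (Sτ R).filter (fun m => m.2 = true)
        = (R.filter (fun m => m.2 = true)).map eqv.symm.toEmbedding := by
      ext m
      simp [hSτ, Finset.mem_map_equiv, heqv_ap]
    rw [hfilter]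
    simp only [Finset.sum_map]
    have hg : ∀ m : Fin N × Spin, ((eqv.symm.toEmbedding m).1.val : ℂ) + 1
        = ((m.1.val : ℂ) + 1) + P - N * (((m.1.val + P) / N : ℕ) : ℂ) := by
      intro m
      have h1 : (eqv.symm.toEmbedding m).1 = shiftP N P hN m.1 := by
        rw [Equiv.coe_toEmbedding, heqv_symm m]
      have h2 : (((eqv.symm.toEmbedding m).1.val : ℕ) : ℂ)
          = (((m.1.val + P) % N : ℕ) : ℂ) := by rw [h1]; rfl
      rw [h2, hterm2]
      ring
    rw [Finset.sum_congr rfl fun m _ => hg m]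
    rw [Finset.sum_sub_distrib, Finset.sum_add_distrib, Finset.sum_const, hR,
      ← Finset.mul_sum, ← Nat.cast_sum]
    obtain ⟨n, hn⟩ : ∃ n : ℤ,
        ((∑ m ∈ R.filter (fun m => m.2 = true), (m.1.val + P) / N : ℕ) : ℂ) = (n : ℂ) :=
      ⟨((∑ m ∈ R.filter (fun m => m.2 = true), (m.1.val + P) / N : ℕ) : ℤ), by norm_cast⟩
    have hexp : 2 * (Real.pi : ℂ) * Complex.I *
          ((∑ m ∈ R.filter (fun m => m.2 = true), ((m.1.val : ℂ) + 1))
            + Nup • (P : ℂ)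
            - (N : ℂ) * ((∑ m ∈ R.filter (fun m => m.2 = true), (m.1.val + P) / N : ℕ) : ℂ)) / N
        = (Real.pi * Complex.I * P * (((Ne : ℝ) : ℂ) / (N : ℂ))
            + 2 * Real.pi * Complex.I *
              (∑ m ∈ R.filter (fun m => m.2 = true), ((m.1.val : ℂ) + 1)) / N)
          + ((-n : ℤ) : ℂ) * (2 * Real.pi * Complex.I) := by
      have hNe' : ((Ne : ℝ) : ℂ) = 2 * (Nup : ℂ) := by
        rw [hNe]; push_cast; ring
      rw [hNe', nsmul_eq_mul, hn, Int.cast_neg]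
      field_simp
      ring
    rw [hexp, Complex.exp_add, Complex.exp_add, Complex.exp_int_mul_two_pi_mul_I, mul_one]
  -- part 1
  have part1 : T (Utw N Φ) =
      Complex.exp (Real.pi * Complex.I * P * ((Ne : ℝ) / N)) • Utw N Φ := by
    funext R
    rw [Pi.smul_apply, smul_eq_mul, Tapply, Utw_apply, Utw_apply]
    by_cases hR : Φ R = 0
    · have h := hcoef R
      rw [hR] at h
      rw [hR, mul_zero, mul_zero]
      linear_combination (Complex.exp (2 * Real.pi * Complex.I *
        (∑ m ∈ (Sτ R).filter (fun m => m.2 = true), ((m.1.val : ℂ) + 1)) / N)) * h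
    · linear_combination (Complex.exp (2 * Real.pi * Complex.I *
          (∑ m ∈ (Sτ R).filter (fun m => m.2 = true), ((m.1.val : ℂ) + 1)) / N)) * hcoef R
        + Φ R * key R (hup R hR)
  refine ⟨part1, ?_⟩
  -- part 2
  intro hk
  have h1 : fdot Φ (Utw N Φ)
      = Complex.exp (Real.pi * Complex.I * P * ((Ne : ℝ) / N)) * fdot Φ (Utw N Φ) := by
    conv_lhs => rw [← hTunitary Φ (Utw N Φ)]
    rw [hTΦ, part1, fdot_smul_right]
  have hc : Complex.exp (Real.pi * Complex.I * P * ((Ne : ℝ) / N)) ≠ 1 := by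
    intro h
    rw [Complex.exp_eq_one_iff] at h
    obtain ⟨n, hn⟩ := h
    apply hk
    have hπI : (Real.pi : ℂ) * Complex.I ≠ 0 :=
      mul_ne_zero (by exact_mod_cast Real.pi_ne_zero) Complex.I_ne_zero
    have h3 : (Real.pi : ℂ) * Complex.I *
        ((P : ℂ) * (((Ne : ℝ) : ℂ) / (N : ℂ)) - 2 * n) = 0 := by
      linear_combination hn
    have h2 := (mul_eq_zero.mp h3).resolve_left hπI
    have h4 : ((P : ℝ) * ((Ne : ℝ) / N) - 2 * n : ℝ) = 0 := by
      exact_mod_cast h2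
    exact ⟨n, by linarith⟩
  have h5 : (1 - Complex.exp (Real.pi * Complex.I * P * ((Ne : ℝ) / N)))
      * fdot Φ (Utw N Φ) = 0 := by linear_combination h1
  rcases mul_eq_zero.mp h5 with h | h
  · exact absurd (by linear_combination -h) hc
  · exact h


end Hubbard
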